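/- For 1 ≤ k ≤ d < n, P(n, d) ≤ P(n−k, d) · C(n, k), where C(n, k) is the binomial coefficient. -/

import Mathlib

def permDist {n : ℕ} (σ τ : Equiv.Perm (Fin n)) : ℕ :=
  Finset.univ.sup fun i => Nat.dist (σ i : ℕ) (τ i : ℕ)

noncomputable def P (n d : ℕ) : ℕ :=
  sSup {k | ∃ A : Finset (Equiv.Perm (Fin n)),
    (∀ σ ∈ A, ∀ τ ∈ A, σ ≠ τ → d ≤ permDist σ τ) ∧ A.card = k}

open Finset

/-- positions of the top `k` values -/
def topSet {n : ℕ} (k : ℕ) (σ : Equiv.Perm (Fin n)) : Finset (Fin n) :=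
  Finset.univ.filter fun i => n - k ≤ (σ i : ℕ)

lemma card_filter_coe_lt (n m : ℕ) (h : m ≤ n) :
    (Finset.univ.filter fun j : Fin n => (j : ℕ) < m).card = m := by
  have : (Finset.univ.filter fun j : Fin n => (j : ℕ) < m)
      = (Finset.range m).attachFin (fun x hx => lt_of_lt_of_le (Finset.mem_range.mp hx) h) := by
    ext j
    simp [Finset.mem_attachFin]
  rw [this, Finset.card_attachFin, Finset.card_range]

lemma card_topSet {n k : ℕ} (h : k ≤ n) (σ : Equiv.Perm (Fin n)) :
    (topSet k σ).card = k := by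
  have h1 : topSet k σ = (Finset.univ.filter fun j : Fin n => n - k ≤ (j : ℕ)).map
      (Equiv.toEmbedding σ.symm) := by
    ext i
    simp [topSet, Finset.mem_map, Equiv.toEmbedding]
  have h2 : (Finset.univ.filter fun j : Fin n => n - k ≤ (j : ℕ)).card = k := by
    have := Finset.card_filter_add_card_filter_not
      (s := (Finset.univ : Finset (Fin n))) (p := fun j : Fin n => (j : ℕ) < n - k)
    rw [card_filter_coe_lt n (n - k) (Nat.sub_le n k)] at this
    have he : (Finset.univ.filter fun j : Fin n => ¬ (j : ℕ) < n - k)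
        = Finset.univ.filter fun j : Fin n => n - k ≤ (j : ℕ) := by
      ext j; simp [not_lt]
    rw [he] at this
    simp only [Finset.card_univ, Fintype.card_fin] at this
    omega
  rw [h1, Finset.card_map, h2]

/-- auxiliary reduction of a permutation given its top set -/
noncomputable def reduceAux {n : ℕ} (k : ℕ) (S : Finset (Fin n)) (hS : Sᶜ.card = n - k)
    (σ : Equiv.Perm (Fin n)) (hσ : ∀ i, i ∈ S ↔ n - k ≤ (σ i : ℕ)) :
    Equiv.Perm (Fin (n - k)) := by
  refine Equiv.ofBijective (fun x => ⟨(σ (Sᶜ.orderEmbOfFin hS x) : ℕ), ?_⟩)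
    (Finite.injective_iff_bijective.mp ?_)
  · have hm : Sᶜ.orderEmbOfFin hS x ∈ Sᶜ := Finset.orderEmbOfFin_mem _ _ _
    rw [Finset.mem_compl, hσ] at hm
    omega
  · intro x y hxy
    simp only [Fin.mk.injEq, Fin.val_inj] at hxy
    exact (Sᶜ.orderEmbOfFin hS).injective (σ.injective hxy)

lemma reduceAux_apply {n : ℕ} (k : ℕ) (S : Finset (Fin n)) (hS : Sᶜ.card = n - k)
    (σ : Equiv.Perm (Fin n)) (hσ : ∀ i, i ∈ S ↔ n - k ≤ (σ i : ℕ)) (x : Fin (n - k)) :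
    ((reduceAux k S hS σ hσ x : Fin (n - k)) : ℕ) = (σ (Sᶜ.orderEmbOfFin hS x) : ℕ) := rfl

lemma reduceAux_dist {n k d : ℕ} (hk : 1 ≤ k) (hkd : k ≤ d)
    (S : Finset (Fin n)) (hS : Sᶜ.card = n - k)
    (σ τ : Equiv.Perm (Fin n)) (hσ : ∀ i, i ∈ S ↔ n - k ≤ (σ i : ℕ))
    (hτ : ∀ i, i ∈ S ↔ n - k ≤ (τ i : ℕ)) (hdist : d ≤ permDist σ τ) :
    d ≤ permDist (reduceAux k S hS σ hσ) (reduceAux k S hS τ hτ) := by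
  have hd0 : (0 : ℕ) < d := lt_of_lt_of_le hk hkd
  rw [permDist, Finset.le_sup_iff hd0] at hdist
  obtain ⟨i, -, hi⟩ := hdist
  have hiS : i ∉ S := by
    intro hmem
    have h1 : n - k ≤ (σ i : ℕ) := (hσ i).mp hmem
    have h2 : n - k ≤ (τ i : ℕ) := (hτ i).mp hmem
    have h3 : (σ i : ℕ) < n := (σ i).isLt
    have h4 : (τ i : ℕ) < n := (τ i).isLt
    have : Nat.dist (σ i : ℕ) (τ i : ℕ) < d := by
      unfold Nat.dist; omega
    omega
  have hiC : (i : Fin n) ∈ (Sᶜ : Finset (Fin n)) := Finset.mem_compl.mpr hiS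
  have : i ∈ Set.range (Sᶜ.orderEmbOfFin hS) := by
    rw [Finset.range_orderEmbOfFin]; exact_mod_cast hiC
  obtain ⟨x, hx⟩ := this
  rw [permDist, Finset.le_sup_iff hd0]
  refine ⟨x, Finset.mem_univ x, ?_⟩
  rw [Nat.dist, reduceAux_apply, reduceAux_apply, hx]
  exact hi

theorem stmt12 (n d k : ℕ) (hk : 1 ≤ k) (hkd : k ≤ d) (hd : d < n) :
    P n d ≤ P (n - k) d * Nat.choose n k := by
  have hkn : k ≤ n := le_of_lt (lt_of_le_of_lt hkd hd)
  apply csSup_le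
  · exact ⟨0, ∅, by simp⟩
  rintro m ⟨A, hA, rfl⟩
  -- fiberwise count
  have hmem : ∀ σ ∈ A, topSet k σ ∈ Finset.powersetCard k (Finset.univ : Finset (Fin n)) := by
    intro σ _
    rw [Finset.mem_powersetCard_univ]
    exact card_topSet hkn σ
  rw [Finset.card_eq_sum_card_fiberwise hmem]
  have hbound : ∀ S ∈ Finset.powersetCard k (Finset.univ : Finset (Fin n)),
      (A.filter fun σ => topSet k σ = S).card ≤ P (n - k) d := by
    intro S hSmem
    set B := A.filter fun σ => topSet k σ = S with hB
    rcases B.eq_empty_or_nonempty with he | hne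
    · simp [he]
    have hScard : S.card = k := Finset.mem_powersetCard_univ.mp hSmem
    have hS : Sᶜ.card = n - k := by
      rw [Finset.card_compl, hScard]; simp
    have htop : ∀ σ ∈ B, ∀ i, i ∈ S ↔ n - k ≤ (σ i : ℕ) := by
      intro σ hσ i
      have := (Finset.mem_filter.mp hσ).2
      rw [← this]
      simp [topSet]
    set g : {σ // σ ∈ B} → Equiv.Perm (Fin (n - k)) :=
      fun σ => reduceAux k S hS σ.1 (htop σ.1 σ.2) with hg
    set B' : Finset (Equiv.Perm (Fin (n - k))) := B.attach.image g with hB'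
    have hcode : ∀ σ ∈ B, σ ∈ A := fun σ hσ => (Finset.mem_filter.mp hσ).1
    have hdist' : ∀ σ : {x // x ∈ B}, ∀ τ : {x // x ∈ B}, σ.1 ≠ τ.1 →
        d ≤ permDist (g σ) (g τ) := by
      intro σ τ hne'
      exact reduceAux_dist hk hkd S hS σ.1 τ.1 _ _
        (hA σ.1 (hcode _ σ.2) τ.1 (hcode _ τ.2) hne')
    have hginj : Set.InjOn g B.attach := by
      intro σ _ τ _ hgst
      by_contra hne'
      have hne'' : σ.1 ≠ τ.1 := fun h => hne' (Subtype.ext h)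
      have := hdist' σ τ hne''
      rw [hgst] at this
      have : permDist (g τ) (g τ) = 0 := by
        simp [permDist, Nat.dist_self]
      omega
    have hcard' : B'.card = B.card := by
      rw [hB', Finset.card_image_of_injOn hginj, Finset.card_attach]
    have hmem' : B'.card ∈ {m | ∃ A : Finset (Equiv.Perm (Fin (n - k))),
        (∀ σ ∈ A, ∀ τ ∈ A, σ ≠ τ → d ≤ permDist σ τ) ∧ A.card = m} := by
      refine ⟨B', ?_, rfl⟩
      intro σ' hσ' τ' hτ' hne'
      obtain ⟨σ, -, rfl⟩ := Finset.mem_image.mp hσ'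
      obtain ⟨τ, -, rfl⟩ := Finset.mem_image.mp hτ'
      have : σ.1 ≠ τ.1 := by
        intro h
        exact hne' (congrArg g (Subtype.ext h))
      exact hdist' σ τ this
    have hbdd : BddAbove {m | ∃ A : Finset (Equiv.Perm (Fin (n - k))),
        (∀ σ ∈ A, ∀ τ ∈ A, σ ≠ τ → d ≤ permDist σ τ) ∧ A.card = m} := by
      refine ⟨Fintype.card (Equiv.Perm (Fin (n - k))), ?_⟩
      rintro m ⟨A', -, rfl⟩
      exact Finset.card_le_univ A'
    calc B.card = B'.card := hcard'.symm
    _ ≤ P (n - k) d := le_csSup hbdd hmem'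
  calc ∑ S ∈ Finset.powersetCard k (Finset.univ : Finset (Fin n)),
        (A.filter fun σ => topSet k σ = S).card
      ≤ ∑ S ∈ Finset.powersetCard k (Finset.univ : Finset (Fin n)), P (n - k) d :=
        Finset.sum_le_sum hbound
    _ = (Finset.powersetCard k (Finset.univ : Finset (Fin n))).card * P (n - k) d := by
        rw [Finset.sum_const, smul_eq_mul]
    _ = P (n - k) d * Nat.choose n k := by
        rw [Finset.card_powersetCard, Finset.card_univ, Fintype.card_fin, mul_comm]
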